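/- For all integers p, q with 0 ≤ p < q, the identity W_q·z_{−p} − W_p·z_{−q} − W_{q−p−1}·(t^{p+1} z₁ y₀ y₋₁ ⋯ y₋ₚ) = 0 holds in ℤ[H] ⊕ ℤ[H], where W·a denotes the right scalar action of a ∈ ℤ[H] on ℤ[H] ⊕ ℤ[H]. -/

import Mathlib

open Finsupp Multiplicative

/-- The shift automorphism of the free abelian group `ℤ →₀ ℤ`, sending the basis element
`single n 1` (i.e. `x_n`) to `single (n + 1) 1` (i.e. `x_{n+1}`). -/
noncomputable def shiftAut : Multiplicative (ℤ →₀ ℤ) ≃* Multiplicative (ℤ →₀ ℤ) :=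
  AddEquiv.toMultiplicative (Finsupp.domCongr (Equiv.addRight (1 : ℤ)))

/-- The action of `ℤ` on the free abelian group `ℤ →₀ ℤ` by shifting. -/
noncomputable def shiftHom : Multiplicative ℤ →* MulAut (Multiplicative (ℤ →₀ ℤ)) :=
  zpowersHom _ (shiftAut : MulAut (Multiplicative (ℤ →₀ ℤ)))

/-- The wreath product `H = ℤ ≀ ℤ`: the semidirect product of the free abelian group `N`
with basis `{x_n : n ∈ ℤ}` (multiplicative `ℤ →₀ ℤ`) by an infinite cyclic group `⟨t⟩`,
where conjugation by `t` sends `x_n` to `x_{n+1}`. -/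
noncomputable abbrev Hgrp : Type :=
  Multiplicative (ℤ →₀ ℤ) ⋊[shiftHom] Multiplicative ℤ

/-- The element `x_n = tⁿ x t⁻ⁿ` of `H`. -/
noncomputable def xE (n : ℤ) : Hgrp :=
  SemidirectProduct.inl (Multiplicative.ofAdd (Finsupp.single n 1))

/-- The element `t` of `H`. -/
noncomputable def tE : Hgrp :=
  SemidirectProduct.inr (Multiplicative.ofAdd 1)

/-- The integral group ring `ℤ[H]`. -/
noncomputable abbrev Agr : Type := MonoidAlgebra ℤ Hgrp

/-- The element `x_i ∈ ℤ[H]`. -/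
noncomputable def XA (i : ℤ) : Agr := MonoidAlgebra.of ℤ Hgrp (xE i)

/-- The element `t ∈ ℤ[H]`. -/
noncomputable def TA : Agr := MonoidAlgebra.of ℤ Hgrp tE

/-- `y_i = 1 - x_i`. -/
noncomputable def yA (i : ℤ) : Agr := 1 - XA i

/-- `z_i = x_{i-1} - x_i`. -/
noncomputable def zA (i : ℤ) : Agr := XA (i - 1) - XA i

/-- The product `y₀ y₋₁ ⋯ y_k` (equal to `1` when `k > 0`). -/
noncomputable def yProd (k : ℤ) : Agr :=
  ((List.range (1 - k).toNat).map (fun i => yA (-(i : ℤ)))).prod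

/-- `U_n = z_{−n} − t^{n+1} z₁ y₀ y₋₁ ⋯ y₋ₙ`. -/
noncomputable def UU (n : ℕ) : Agr :=
  zA (-(n : ℤ)) - TA ^ (n + 1) * zA 1 * yProd (-(n : ℤ))

/-- `V_n = z_{−n} + Σ_{i=1}^{n} tⁱ z_{−n} z₁ y₀ y₋₁ ⋯ y_{2−i} − t^{n+1} z₁ y₀ ⋯ y_{1−n} y_{−1−n}`. -/
noncomputable def VV (n : ℕ) : Agr :=
  zA (-(n : ℤ)) + (∑ i ∈ Finset.Icc 1 n, TA ^ i * zA (-(n : ℤ)) * zA 1 * yProd (2 - (i : ℤ)))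
    - TA ^ (n + 1) * zA 1 * yProd (1 - (n : ℤ)) * yA (-1 - (n : ℤ))

/-- `W_n = (U_n, V_n) ∈ ℤ[H] ⊕ ℤ[H]`. -/
noncomputable def WW (n : ℕ) : Agr × Agr := (UU n, VV n)

/-- `1 − t + t x ∈ ℤ[H]`. -/
noncomputable def aElt : Agr := 1 - TA + TA * XA 0

/-- `1 − t + t² x t⁻¹ ∈ ℤ[H]`. -/
noncomputable def bElt : Agr := 1 - TA + MonoidAlgebra.of ℤ Hgrp (tE ^ 2 * xE 0 * tE⁻¹)

/-- The homomorphism of right `ℤ[H]`-modules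
`f(U, V) = (1 − t + t x)·U − (1 − t + t² x t⁻¹)·V`;
right `ℤ[H]`-modules are `ℤ[H]ᵐᵒᵖ`-modules. -/
noncomputable def fMap : (Agr × Agr) →ₗ[Agrᵐᵒᵖ] Agr where
  toFun p := aElt * p.1 - bElt * p.2
  map_add' v w := by
    simp only [Prod.fst_add, Prod.snd_add, mul_add]
    abel
  map_smul' c v := by
    simp only [Prod.smul_fst, Prod.smul_snd, MulOpposite.smul_eq_mul_unop, RingHom.id_apply]
    rw [sub_mul, mul_assoc, mul_assoc]


/-! ### Auxiliary machinery -/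

/-- The commutative group ring `ℤ[N]`. -/
noncomputable abbrev Rr : Type := MonoidAlgebra ℤ (Multiplicative (ℤ →₀ ℤ))

noncomputable def Xr (i : ℤ) : Rr :=
  MonoidAlgebra.of ℤ _ (Multiplicative.ofAdd (Finsupp.single i 1))

noncomputable def Yr (i : ℤ) : Rr := 1 - Xr i
noncomputable def Zr (i : ℤ) : Rr := Xr (i - 1) - Xr i
noncomputable def Qr (a : ℤ) (n : ℕ) : Rr := ((List.range n).map (fun i : ℕ => Yr (a - (i : ℤ)))).prod

noncomputable def shMul (k : ℤ) : Multiplicative (ℤ →₀ ℤ) →* Multiplicative (ℤ →₀ ℤ) :=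
  (AddEquiv.toMultiplicative (Finsupp.domCongr (Equiv.addRight k))).toMonoidHom

noncomputable def Sh (k : ℤ) : Rr →+* Rr := MonoidAlgebra.mapDomainRingHom ℤ (shMul k)

noncomputable def kap : Rr →+* Agr :=
  MonoidAlgebra.mapDomainRingHom ℤ (SemidirectProduct.inl : _ →* Hgrp)

lemma shMul_apply (k : ℤ) (g : Multiplicative (ℤ →₀ ℤ)) :
    shMul k g = Multiplicative.ofAdd
      (Finsupp.equivMapDomain (Equiv.addRight k) (Multiplicative.toAdd g)) := rfl

lemma shMul_ofAdd_single (k i : ℤ) (c : ℤ) :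
    shMul k (Multiplicative.ofAdd (Finsupp.single i c))
      = Multiplicative.ofAdd (Finsupp.single (i + k) c) := by
  rw [shMul_apply]
  congr 1
  rw [show Multiplicative.toAdd (Multiplicative.ofAdd (Finsupp.single i c))
      = Finsupp.single i c from rfl, Finsupp.equivMapDomain_single]
  rfl

lemma shMul_comp (a b : ℤ) (g : Multiplicative (ℤ →₀ ℤ)) :
    shMul a (shMul b g) = shMul (a + b) g := by
  rw [shMul_apply, shMul_apply, shMul_apply]
  congr 1
  rw [show (Multiplicative.toAdd (Multiplicative.ofAdd
      (Finsupp.equivMapDomain (Equiv.addRight b) (Multiplicative.toAdd g))))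
      = Finsupp.equivMapDomain (Equiv.addRight b) (Multiplicative.toAdd g) from rfl]
  ext x
  rw [Finsupp.equivMapDomain_apply, Finsupp.equivMapDomain_apply, Finsupp.equivMapDomain_apply]
  congr 1
  simp only [Equiv.addRight_symm_apply]
  ring

lemma shMul_zero_apply (g : Multiplicative (ℤ →₀ ℤ)) : shMul 0 g = g := by
  rw [shMul_apply]
  conv_rhs => rw [show g = Multiplicative.ofAdd (Multiplicative.toAdd g) from rfl]
  congr 1
  ext x
  rw [Finsupp.equivMapDomain_apply]
  simp
  rfl

lemma Sh_single (k : ℤ) (g : Multiplicative (ℤ →₀ ℤ)) (c : ℤ) :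
    Sh k (MonoidAlgebra.single g c) = MonoidAlgebra.single (shMul k g) c := by
  show MonoidAlgebra.mapDomain _ _ = _
  rw [MonoidAlgebra.mapDomain_single]

lemma kap_single (g : Multiplicative (ℤ →₀ ℤ)) (c : ℤ) :
    kap (MonoidAlgebra.single g c) = MonoidAlgebra.single (SemidirectProduct.inl g : Hgrp) c := by
  show MonoidAlgebra.mapDomain _ _ = _
  rw [MonoidAlgebra.mapDomain_single]

lemma Sh_X (k i : ℤ) : Sh k (Xr i) = Xr (i + k) := by
  rw [Xr, MonoidAlgebra.of_apply, Sh_single, shMul_ofAdd_single, Xr, MonoidAlgebra.of_apply]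

lemma Sh_Sh (a b : ℤ) (r : Rr) : Sh a (Sh b r) = Sh (a + b) r := by
  induction r using MonoidAlgebra.induction_linear with
  | zero => simp
  | add f g hf hg => rw [map_add, map_add, map_add, hf, hg]
  | single g c =>
    rw [Sh_single, Sh_single, Sh_single, shMul_comp]

lemma Sh_zero (r : Rr) : Sh 0 r = r := by
  induction r using MonoidAlgebra.induction_linear with
  | zero => simp
  | add f g hf hg => rw [map_add, hf, hg]
  | single g c =>
    rw [Sh_single, shMul_zero_apply]

lemma kap_X (i : ℤ) : kap (Xr i) = XA i := by
  rw [Xr, MonoidAlgebra.of_apply, kap_single, XA, xE, MonoidAlgebra.of_apply]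

lemma shiftHom_one_apply (g : Multiplicative (ℤ →₀ ℤ)) :
    shiftHom (Multiplicative.ofAdd (1 : ℤ)) g = shMul 1 g := by
  rw [shiftHom, zpowersHom_apply]
  rfl

lemma tE_mul_inl (g : Multiplicative (ℤ →₀ ℤ)) :
    tE * SemidirectProduct.inl g = SemidirectProduct.inl (shMul 1 g) * tE := by
  have h := SemidirectProduct.inl_aut (φ := shiftHom) (Multiplicative.ofAdd (1 : ℤ)) g
  rw [shiftHom_one_apply] at h
  rw [tE, h, mul_assoc, mul_assoc, ← map_mul, inv_mul_cancel]
  simp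

lemma TA_kap (r : Rr) : TA * kap r = kap (Sh 1 r) * TA := by
  induction r using MonoidAlgebra.induction_linear with
  | zero => simp
  | add f g hf hg => rw [map_add, map_add, map_add, mul_add, add_mul, hf, hg]
  | single g c =>
    rw [kap_single, Sh_single, kap_single, TA, MonoidAlgebra.of_apply,
      MonoidAlgebra.single_mul_single, MonoidAlgebra.single_mul_single,
      one_mul, mul_one, tE_mul_inl]

lemma TApow_kap (k : ℕ) (r : Rr) : TA ^ k * kap r = kap (Sh (k : ℤ) r) * TA ^ k := by
  induction k generalizing r with
  | zero => rw [pow_zero, one_mul, mul_one, Nat.cast_zero, Sh_zero]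
  | succ k ih =>
    rw [pow_succ, mul_assoc, TA_kap, ← mul_assoc, ih, Sh_Sh, mul_assoc, ← pow_succ,
      show ((k : ℤ) + 1) = ((k + 1 : ℕ) : ℤ) from by push_cast; ring]

lemma kap_TApow (k : ℕ) (r : Rr) : kap r * TA ^ k = TA ^ k * kap (Sh (-(k : ℤ)) r) := by
  rw [TApow_kap, Sh_Sh, show ((k : ℤ) + -(k : ℤ)) = 0 from by ring, Sh_zero]

/-- Normal form `t^k · κ(c)`. -/
noncomputable def FF (k : ℕ) (c : Rr) : Agr := TA ^ k * kap c

lemma FF_mul (k j : ℕ) (c d : Rr) :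
    FF k c * FF j d = FF (k + j) (Sh (-(j : ℤ)) c * d) := by
  rw [FF, FF, FF, mul_assoc, ← mul_assoc (kap c), kap_TApow, mul_assoc, ← map_mul,
    ← mul_assoc, ← pow_add]

lemma FF_kapf (k : ℕ) (c d : Rr) : FF k c * kap d = FF k (c * d) := by
  rw [FF, FF, mul_assoc, ← map_mul]

lemma FF_sub (k : ℕ) (a b : Rr) : FF k (a - b) = FF k a - FF k b := by
  rw [FF, FF, FF, map_sub, mul_sub]

lemma FF_add (k : ℕ) (a b : Rr) : FF k (a + b) = FF k a + FF k b := by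
  rw [FF, FF, FF, map_add, mul_add]

lemma kap_Y (i : ℤ) : yA i = kap (Yr i) := by
  rw [yA, Yr, map_sub, map_one, kap_X]

lemma kap_Z (i : ℤ) : zA i = kap (Zr i) := by
  rw [zA, Zr, map_sub, kap_X, kap_X]

lemma Sh_Y (k i : ℤ) : Sh k (Yr i) = Yr (i + k) := by
  rw [Yr, map_sub, map_one, Sh_X, Yr]

lemma Sh_Z (k i : ℤ) : Sh k (Zr i) = Zr (i + k) := by
  rw [Zr, map_sub, Sh_X, Sh_X, Zr, show i - 1 + k = i + k - 1 from by ring]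

lemma Sh_Q (k a : ℤ) (n : ℕ) : Sh k (Qr a n) = Qr (a + k) n := by
  rw [Qr, map_list_prod, List.map_map, Qr]
  congr 1
  apply List.map_congr_left
  intro i _
  show Sh k (Yr (a - i)) = Yr (a + k - i)
  rw [Sh_Y, show a - i + k = a + k - i from by ring]

lemma Qr_add (a : ℤ) (n m : ℕ) : Qr a (n + m) = Qr a n * Qr (a - n) m := by
  rw [Qr, Qr, Qr, List.range_add, List.map_append, List.prod_append, List.map_map]
  congr 2
  apply List.map_congr_left
  intro i _
  show Yr (a - ((n : ℕ) + i : ℕ)) = Yr (a - n - i)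
  congr 1
  push_cast
  ring

lemma yProd_eq (k : ℤ) : yProd k = kap (Qr 0 (1 - k).toNat) := by
  rw [yProd, Qr, map_list_prod, List.map_map]
  simp only [bind_pure_comp, List.map_eq_map, List.map_map]
  congr 1
  apply List.map_congr_left
  intro i _
  show yA (-(i : ℤ)) = kap (Yr (0 - i))
  rw [kap_Y, show (0 : ℤ) - i = -i from by ring]

lemma FF_zero (c : Rr) : FF 0 c = kap c := by rw [FF, pow_zero, one_mul]

lemma FF_def' (k : ℕ) (c : Rr) : TA ^ k * kap c = FF k c := rfl

lemma scalar_eq (p : ℕ) :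
    TA ^ (p + 1) * zA 1 * yProd (-(p : ℤ)) = FF (p + 1) (Zr 1 * Qr 0 (p + 1)) := by
  rw [kap_Z, yProd_eq, show (1 - -(p : ℤ)).toNat = p + 1 from by omega,
    FF_def', FF_kapf]

lemma UU_eq (n : ℕ) :
    UU n = FF 0 (Zr (-(n : ℤ))) - FF (n + 1) (Zr 1 * Qr 0 (n + 1)) := by
  rw [UU, scalar_eq, FF_zero, kap_Z]

lemma VV_eq (n : ℕ) :
    VV n = FF 0 (Zr (-(n : ℤ)))
      + (∑ j ∈ Finset.range n, FF (j + 1) (Zr (-(n : ℤ)) * Zr 1 * Qr 0 j))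
      - FF (n + 1) (Zr 1 * Qr 0 n * Yr (-1 - (n : ℤ))) := by
  rw [VV, FF_zero, kap_Z]
  refine congrArg₂ (· - ·) ?_ ?_
  · refine congrArg (_ + ·) ?_
    rw [show Finset.Icc 1 n = Finset.Ico 1 (n + 1) from (Finset.Ico_add_one_right_eq_Icc 1 n),
      Finset.sum_Ico_eq_sum_range, Nat.add_sub_cancel]
    refine Finset.sum_congr rfl fun j _ => ?_
    rw [FF_def', kap_Z, FF_kapf, yProd_eq,
      show (1 - (2 - ((1 + j : ℕ) : ℤ))).toNat = j from by push_cast; omega,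
      FF_kapf, add_comm 1 j]
  · rw [kap_Y, kap_Z, yProd_eq, show (1 - (1 - (n : ℤ))).toNat = n from by omega,
      FF_def', FF_kapf, FF_kapf]

lemma Qr_one (a : ℤ) : Qr a 1 = Yr a := by
  rw [Qr, show List.range 1 = [0] from rfl, List.map_singleton, List.prod_singleton, Nat.cast_zero, sub_zero]

/-- For all `0 ≤ p < q` one has
`W_q·z_{−p} − W_p·z_{−q} − W_{q−p−1}·(t^{p+1} z₁ y₀ y₋₁ ⋯ y₋ₚ) = 0` in `ℤ[H] ⊕ ℤ[H]`,
where the right scalar action of `a ∈ ℤ[H]` is `MulOpposite.op a • ·`. -/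
theorem w_relation (p q : ℕ) (hpq : p < q) :
    MulOpposite.op (zA (-(p : ℤ))) • WW q - MulOpposite.op (zA (-(q : ℤ))) • WW p
      - MulOpposite.op (TA ^ (p + 1) * zA 1 * yProd (-(p : ℤ))) • WW (q - p - 1) = 0 := by
  obtain ⟨m, rfl⟩ : ∃ m, q = p + m + 1 := ⟨q - p - 1, by omega⟩
  rw [show p + m + 1 - p - 1 = m from by omega]
  rw [Prod.ext_iff]
  simp only [WW, Prod.smul_mk, MulOpposite.smul_eq_mul_unop, MulOpposite.unop_op,
    Prod.mk_sub_mk, Prod.fst_zero, Prod.snd_zero]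
  constructor
  · rw [UU_eq, UU_eq, UU_eq, scalar_eq, kap_Z (-(p:ℤ)), kap_Z]
    simp only [sub_mul, FF_kapf, FF_mul, map_mul, Sh_Z, Sh_Q]
    rw [zero_add, show p + m + 1 + 1 = (p + 1) + (m + 1) from by omega,
      show m + 1 + (p + 1) = (p + 1) + (m + 1) from by omega, Qr_add 0 (p + 1) (m + 1)]
    push_cast
    ring_nf
    abel
  · rw [VV_eq, VV_eq, VV_eq, scalar_eq, kap_Z (-(p:ℤ)), kap_Z]
    simp only [sub_mul, add_mul, Finset.sum_mul, FF_kapf, FF_mul, map_mul, Sh_Z, Sh_Q, Sh_Y]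
    rw [show p + m + 1 = p + (1 + m) from by omega]
    rw [Finset.sum_range_add, Finset.sum_range_add, Finset.sum_range_one]
    have e0 : FF 0 (Zr (-(p:ℤ)) * Zr (-((p + (1 + m) : ℕ) : ℤ)))
        = FF 0 (Zr (-((p + (1 + m) : ℕ) : ℤ)) * Zr (-(p:ℤ))) := by
      congr 1; ring
    have e1 : (∑ x ∈ Finset.range p,
          FF (x + 1) (Zr (-(p:ℤ)) * Zr 1 * Qr 0 x * Zr (-((p + (1 + m) : ℕ) : ℤ))))
        = ∑ x ∈ Finset.range p,
          FF (x + 1) (Zr (-((p + (1 + m) : ℕ) : ℤ)) * Zr 1 * Qr 0 x * Zr (-(p:ℤ))) := by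
      refine Finset.sum_congr rfl fun x _ => ?_
      congr 1; ring
    have e2 : (∑ x ∈ Finset.range m,
          FF (x + 1 + (p + 1)) (Zr (-(m:ℤ) + -((p + 1 : ℕ) : ℤ)) * Zr (1 + -((p + 1 : ℕ) : ℤ))
            * Qr (0 + -((p + 1 : ℕ) : ℤ)) x * (Zr 1 * Qr 0 (p + 1))))
        = ∑ x ∈ Finset.range m,
          FF (p + (1 + x) + 1) (Zr (-((p + (1 + m) : ℕ) : ℤ)) * Zr 1 * Qr 0 (p + (1 + x))
            * Zr (-(p:ℤ))) := by
      refine Finset.sum_congr rfl fun x _ => ?_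
      rw [show p + (1 + x) = (p + 1) + x from by omega, Qr_add 0 (p + 1) x,
        show (p + 1) + x + 1 = x + 1 + (p + 1) from by omega,
        show (-(m:ℤ) + -((p + 1 : ℕ) : ℤ)) = (-((p + (1 + m) : ℕ) : ℤ)) from by push_cast; ring,
        show ((1:ℤ) + -((p + 1 : ℕ) : ℤ)) = (-(p:ℤ)) from by push_cast; ring,
        show ((0:ℤ) + -((p + 1 : ℕ) : ℤ)) = ((0:ℤ) - ((p + 1 : ℕ) : ℤ)) from by ring]
      congr 1; ring
    have e3 : FF (m + 1 + (p + 1)) (Zr (1 + -((p + 1 : ℕ) : ℤ)) * Qr (0 + -((p + 1 : ℕ) : ℤ)) m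
          * Yr (-1 - (m:ℤ) + -((p + 1 : ℕ) : ℤ)) * (Zr 1 * Qr 0 (p + 1)))
        = FF (p + (1 + m) + 1) (Zr 1 * Qr 0 (p + (1 + m)) * Yr (-1 - ((p + (1 + m) : ℕ) : ℤ))
          * Zr (-(p:ℤ))) := by
      rw [show p + (1 + m) = (p + 1) + m from by omega, Qr_add 0 (p + 1) m,
        show (p + 1) + m + 1 = m + 1 + (p + 1) from by omega,
        show ((1:ℤ) + -((p + 1 : ℕ) : ℤ)) = (-(p:ℤ)) from by push_cast; ring,
        show ((0:ℤ) + -((p + 1 : ℕ) : ℤ)) = ((0:ℤ) - ((p + 1 : ℕ) : ℤ)) from by ring,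
        show (-1 - (m:ℤ) + -((p + 1 : ℕ) : ℤ)) = (-1 - ((p + (1 + m) : ℕ) : ℤ)) from by
          push_cast; ring]
      congr 1; ring
    have e4 : FF (0 + (p + 1)) (Zr (-(m:ℤ) + -((p + 1 : ℕ) : ℤ)) * (Zr 1 * Qr 0 (p + 1)))
        = FF (p + 0 + 1) (Zr (-((p + (1 + m) : ℕ) : ℤ)) * Zr 1 * Qr 0 (p + 0) * Zr (-(p:ℤ)))
          + FF (p + 1) (Zr 1 * Qr 0 p * Yr (-1 - (p:ℤ)) * Zr (-((p + (1 + m) : ℕ) : ℤ))) := by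
      rw [Nat.zero_add, Nat.add_zero, ← FF_add,
        show (-(m:ℤ) + -((p + 1 : ℕ) : ℤ)) = (-((p + (1 + m) : ℕ) : ℤ)) from by push_cast; ring,
        show p + 1 = p + 1 from rfl]
      congr 1
      rw [Qr_add 0 p 1, Qr_one]
      simp only [Zr, Yr]
      push_cast
      ring_nf
    rw [e0, e1, e2, e3, e4]
    abel
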